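/- Let n₁, r, n₂ ≥ 1 and n₃ ≥ 1, A : Fin n₁ → Fin r → ZMod n₃ → ℂ and B : Fin r → Fin n₂ → ZMod n₃ → ℂ. Then for every frequency k ∈ ZMod n₃ and all i, j: the mode-3 DFT of the t-product satisfies (A * B)^ i j k = Σ_{l ∈ Fin r} Â i l k · B̂ l j k. That is, the t-product corresponds, slice by slice in the Fourier domain, to ordinary matrix multiplication of the frontal slices. -/

import Mathlib

open Finset

/-- Mode-3 discrete Fourier transform of a third-order tensor. -/
noncomputable def dft3 {n₁ n₂ n₃ : ℕ} [NeZero n₃]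
    (A : Fin n₁ → Fin n₂ → ZMod n₃ → ℂ) : Fin n₁ → Fin n₂ → ZMod n₃ → ℂ :=
  fun i j k => ∑ m : ZMod n₃,
    A i j m * Complex.exp (-(2 * (Real.pi : ℂ) * Complex.I *
      ((k.val : ℂ) * (m.val : ℂ))) / (n₃ : ℂ))

/-- The t-product: matrix multiplication combined with circular convolution
along the third mode. -/
noncomputable def tProd3 {n₁ r n₂ n₃ : ℕ} [NeZero n₃]
    (A : Fin n₁ → Fin r → ZMod n₃ → ℂ) (B : Fin r → Fin n₂ → ZMod n₃ → ℂ) :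
    Fin n₁ → Fin n₂ → ZMod n₃ → ℂ :=
  fun i j k => ∑ l : Fin r, ∑ m : ZMod n₃, A i l m * B l j (k - m)

lemma expChar_eq_pow {n : ℕ} [NeZero n] (k m : ZMod n) :
    Complex.exp (-(2 * (Real.pi : ℂ) * Complex.I * ((k.val : ℂ) * (m.val : ℂ))) / (n : ℂ))
      = (Complex.exp (-(2 * (Real.pi : ℂ) * Complex.I * (k.val : ℂ)) / (n : ℂ))) ^ m.val := by
  rw [← Complex.exp_nat_mul]
  congr 1
  ring

lemma zeta_pow_n {n : ℕ} [NeZero n] (k : ZMod n) :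
    (Complex.exp (-(2 * (Real.pi : ℂ) * Complex.I * (k.val : ℂ)) / (n : ℂ))) ^ n = 1 := by
  rw [← Complex.exp_nat_mul]
  have hn : (n : ℂ) ≠ 0 := Nat.cast_ne_zero.mpr (NeZero.ne n)
  have : (n : ℂ) * (-(2 * (Real.pi : ℂ) * Complex.I * (k.val : ℂ)) / (n : ℂ))
      = ((-(k.val : ℤ)) : ℂ) * (2 * Real.pi * Complex.I) := by
    push_cast
    field_simp
  rw [this]
  exact_mod_cast Complex.exp_int_mul_two_pi_mul_I (-(k.val : ℤ))

lemma expChar_add {n : ℕ} [NeZero n] (k a b : ZMod n) :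
    Complex.exp (-(2 * (Real.pi : ℂ) * Complex.I * ((k.val : ℂ) * (((a + b : ZMod n)).val : ℂ))) / (n : ℂ))
      = Complex.exp (-(2 * (Real.pi : ℂ) * Complex.I * ((k.val : ℂ) * (a.val : ℂ))) / (n : ℂ))
      * Complex.exp (-(2 * (Real.pi : ℂ) * Complex.I * ((k.val : ℂ) * (b.val : ℂ))) / (n : ℂ)) := by
  rw [expChar_eq_pow, expChar_eq_pow, expChar_eq_pow, ← pow_add, ZMod.val_add]
  conv_rhs => rw [← Nat.mod_add_div (a.val + b.val) n, pow_add, pow_mul, zeta_pow_n, one_pow,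
    mul_one]

/-- In the Fourier domain, the t-product corresponds slice by slice to
ordinary matrix multiplication of the frontal slices. -/
theorem dft3_tprod {n₁ r n₂ n₃ : ℕ} (hn₁ : 1 ≤ n₁) (hr : 1 ≤ r) (hn₂ : 1 ≤ n₂)
    [NeZero n₃] (A : Fin n₁ → Fin r → ZMod n₃ → ℂ)
    (B : Fin r → Fin n₂ → ZMod n₃ → ℂ) :
    ∀ (k : ZMod n₃) (i : Fin n₁) (j : Fin n₂),
      dft3 (tProd3 A B) i j k = ∑ l : Fin r, dft3 A i l k * dft3 B l j k := by
  intro k i j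
  unfold dft3 tProd3
  simp_rw [Finset.sum_mul]
  rw [Finset.sum_comm]
  refine Finset.sum_congr rfl fun l _ => ?_
  simp_rw [Finset.mul_sum]
  rw [Finset.sum_comm]
  refine Finset.sum_congr rfl fun p _ => ?_
  rw [← Equiv.sum_comp (Equiv.addLeft p) (fun m => A i l p * B l j (m - p) *
    Complex.exp (-(2 * (Real.pi : ℂ) * Complex.I * ((k.val : ℂ) * (m.val : ℂ))) / (n₃ : ℂ)))]
  refine Finset.sum_congr rfl fun q _ => ?_
  simp only [Equiv.coe_addLeft]
  rw [add_sub_cancel_left, expChar_add k p q]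
  ring
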